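/- arXiv:2405.09106 — 2 statements merged into one kernel-verified Lean document; each statement's English description precedes it below -/
import Mathlib

section
/- Let f : ℝⁿ → ℝ be differentiable with L-Lipschitz gradient and satisfy the PL inequality (1/2)‖∇f(x)‖² ≥ l (f(x) − f*) with 0 < l ≤ L, where f* = f(x*) is the global minimum. Then gradient descent with constant step size h = 1/L, i.e., x_{k+1} = x_k − (1/L)∇f(x_k), satisfies f(x_k) − f* ≤ (1 − l/L)^k (f(x_0) − f*) for all k. -/
open scoped RealInnerProductSpace

lemma descent_aux {n : ℕ} (f : EuclideanSpace ℝ (Fin n) → ℝ)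
    (hf : Differentiable ℝ f) (L : ℝ) (hL : 0 < L)
    (hlip : ∀ x y, ‖gradient f x - gradient f y‖ ≤ L * ‖x - y‖)
    (x v : EuclideanSpace ℝ (Fin n)) :
    f (x + v) ≤ f x + ⟪gradient f x, v⟫ + L / 2 * ‖v‖ ^ 2 := by
  have hgc : Continuous (fun y => gradient f y) := by
    refine LipschitzWith.continuous (K := ⟨L, hL.le⟩) ?_
    apply LipschitzWith.of_dist_le_mul
    intro a b
    rw [dist_eq_norm, dist_eq_norm]
    exact hlip a b
  have hderiv : ∀ t : ℝ, HasDerivAt (fun t : ℝ => f (x + t • v))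
      ⟪gradient f (x + t • v), v⟫ t := by
    intro t
    have hc : HasDerivAt (fun t : ℝ => x + t • v) v t := by
      simpa using ((hasDerivAt_id t).smul_const v).const_add x
    have hfd : HasFDerivAt f ((InnerProductSpace.toDual ℝ _) (gradient f (x + t • v)))
        (x + t • v) := ((hf _).hasGradientAt).hasFDerivAt
    have h3 := hfd.comp_hasDerivAt t hc
    simp only [InnerProductSpace.toDual_apply_apply] at h3
    exact h3
  have hcont : Continuous (fun t : ℝ => ⟪gradient f (x + t • v), v⟫) := by
    exact (hgc.comp (by continuity)).inner continuous_const
  have hFTC : f (x + v) - f x = ∫ t in (0:ℝ)..1, ⟪gradient f (x + t • v), v⟫ := by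
    have := intervalIntegral.integral_eq_sub_of_hasDerivAt
      (f := fun t : ℝ => f (x + t • v)) (a := (0:ℝ)) (b := 1)
      (fun t _ => hderiv t) (hcont.intervalIntegrable 0 1)
    simpa using this.symm
  have hbound : ∀ t ∈ Set.Icc (0:ℝ) 1,
      ⟪gradient f (x + t • v), v⟫ ≤ ⟪gradient f x, v⟫ + L * t * ‖v‖ ^ 2 := by
    intro t ht
    have h1 : ⟪gradient f (x + t • v) - gradient f x, v⟫ ≤ L * t * ‖v‖ ^ 2 := by
      calc ⟪gradient f (x + t • v) - gradient f x, v⟫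
          ≤ ‖gradient f (x + t • v) - gradient f x‖ * ‖v‖ := real_inner_le_norm _ _
        _ ≤ (L * ‖(x + t • v) - x‖) * ‖v‖ := by
            exact mul_le_mul_of_nonneg_right (hlip _ _) (norm_nonneg _)
        _ = L * t * ‖v‖ ^ 2 := by
            rw [add_sub_cancel_left, norm_smul, Real.norm_eq_abs, abs_of_nonneg ht.1]
            ring
    have h2 : ⟪gradient f (x + t • v), v⟫
        = ⟪gradient f x, v⟫ + ⟪gradient f (x + t • v) - gradient f x, v⟫ := by
      rw [inner_sub_left]; ring
    linarith
  have hmono : (∫ t in (0:ℝ)..1, ⟪gradient f (x + t • v), v⟫)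
      ≤ ∫ t in (0:ℝ)..1, (⟪gradient f x, v⟫ + L * t * ‖v‖ ^ 2) := by
    apply intervalIntegral.integral_mono_on (by norm_num)
      (hcont.intervalIntegrable 0 1)
      ((by continuity : Continuous fun t : ℝ => ⟪gradient f x, v⟫ + L * t * ‖v‖ ^ 2).intervalIntegrable 0 1)
    exact hbound
  have hint : (∫ t in (0:ℝ)..1, (⟪gradient f x, v⟫ + L * t * ‖v‖ ^ 2))
      = ⟪gradient f x, v⟫ + L / 2 * ‖v‖ ^ 2 := by
    have e1 : (fun t : ℝ => ⟪gradient f x, v⟫ + L * t * ‖v‖ ^ 2)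
        = fun t : ℝ => ⟪gradient f x, v⟫ + (L * ‖v‖ ^ 2) * t := by
      funext t; ring
    rw [e1, intervalIntegral.integral_add (f := fun _ => ⟪gradient f x, v⟫) (g := fun t : ℝ => (L * ‖v‖ ^ 2) * t) intervalIntegrable_const
      (((continuous_const.mul continuous_id) : Continuous fun t : ℝ => (L * ‖v‖ ^ 2) * t).intervalIntegrable 0 1),
      intervalIntegral.integral_const_mul, integral_id,
      intervalIntegral.integral_const]
    simp; ring
  linarith [hFTC, hmono, hint]

theorem gradient_descent_linear_rate_of_PL
    {n : ℕ} (f : EuclideanSpace ℝ (Fin n) → ℝ)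
    (hf : Differentiable ℝ f)
    (L l : ℝ) (hl : 0 < l) (hlL : l ≤ L)
    (hlip : ∀ x y, ‖gradient f x - gradient f y‖ ≤ L * ‖x - y‖)
    (fstar : ℝ) (xstar : EuclideanSpace ℝ (Fin n))
    (hattain : f xstar = fstar)
    (hlb : ∀ x, fstar ≤ f x)
    (hPL : ∀ x, l * (f x - fstar) ≤ (1 / 2) * ‖gradient f x‖ ^ 2)
    (x : ℕ → EuclideanSpace ℝ (Fin n))
    (hiter : ∀ k, x (k + 1) = x k - (1 / L) • gradient f (x k)) :
    ∀ k, f (x k) - fstar ≤ (1 - l / L) ^ k * (f (x 0) - fstar) := by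
  have hL : 0 < L := lt_of_lt_of_le hl hlL
  have hstep : ∀ k, f (x (k + 1)) - fstar ≤ (1 - l / L) * (f (x k) - fstar) := by
    intro k
    set g := gradient f (x k) with hg
    have hxk1 : x (k + 1) = x k + (-(1 / L)) • g := by
      rw [hiter k]; module
    have hd := descent_aux f hf L hL hlip (x k) ((-(1 / L)) • g)
    rw [← hxk1] at hd
    have hinner : ⟪g, (-(1 / L)) • g⟫ = -(1 / L) * ‖g‖ ^ 2 := by
      rw [real_inner_smul_right, real_inner_self_eq_norm_sq]
    have hnorm : ‖(-(1 / L)) • g‖ ^ 2 = (1 / L) ^ 2 * ‖g‖ ^ 2 := by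
      rw [norm_smul, mul_pow, Real.norm_eq_abs]
      norm_num
    rw [hinner, hnorm] at hd
    have hd2 : f (x (k + 1)) ≤ f (x k) - (1 / (2 * L)) * ‖g‖ ^ 2 := by
      have : -(1 / L) * ‖g‖ ^ 2 + L / 2 * ((1 / L) ^ 2 * ‖g‖ ^ 2)
          = -(1 / (2 * L)) * ‖g‖ ^ 2 := by field_simp; ring
      nlinarith [hd]
    have hpl := hPL (x k)
    have hfx : fstar ≤ f (x k) := hlb _
    have hkey : (l / L) * (f (x k) - fstar) ≤ (1 / (2 * L)) * ‖g‖ ^ 2 := by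
      have h2 : (1 / L) * (l * (f (x k) - fstar)) ≤ (1 / L) * ((1 / 2) * ‖g‖ ^ 2) :=
        mul_le_mul_of_nonneg_left hpl (by positivity)
      calc (l / L) * (f (x k) - fstar) = (1 / L) * (l * (f (x k) - fstar)) := by ring
        _ ≤ (1 / L) * ((1 / 2) * ‖g‖ ^ 2) := h2
        _ = (1 / (2 * L)) * ‖g‖ ^ 2 := by ring
    nlinarith
  intro k
  induction k with
  | zero => simp
  | succ k ih =>
    have h1 : (0:ℝ) ≤ 1 - l / L := by
      rw [sub_nonneg]
      exact div_le_one_of_le₀ hlL hL.le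
    calc f (x (k + 1)) - fstar ≤ (1 - l / L) * (f (x k) - fstar) := hstep k
      _ ≤ (1 - l / L) * ((1 - l / L) ^ k * (f (x 0) - fstar)) :=
          mul_le_mul_of_nonneg_left ih h1
      _ = (1 - l / L) ^ (k + 1) * (f (x 0) - fstar) := by ring
end

section
/- Suppose for all k, a sequence Φ_k ≥ f* satisfies E-form recursion T_k ≤ 2L(Φ_k − Φ_{k+1}) + 2σ_k² and 2l(Φ_k − f*) ≤ T_k + μ L² (n+3)^{3/2} d + 2 L d σ_k, where L, l, μ, d > 0 and σ_k ≥ 0. Then for all N: (1/(N+1)) Σ_{k=0}^N (Φ_k − f*) ≤ (L/l)(Φ_0 − f*)/(N+1) + μ d L² (n+3)^{3/2}/(2l) + (L d)/(l(N+1)) Σ_{k=0}^N σ_k + (1/(l(N+1))) Σ_{k=0}^N σ_k². -/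
theorem constrained_convergence_arithmetic
    (Φ T σ : ℕ → ℝ) (L l μ d fstar : ℝ) (n : ℕ)
    (hL : 0 < L) (hl : 0 < l) (hμ : 0 < μ) (hd : 0 < d)
    (hΦ : ∀ k, fstar ≤ Φ k) (hσ : ∀ k, 0 ≤ σ k)
    (hrec : ∀ k, T k ≤ 2 * L * (Φ k - Φ (k + 1)) + 2 * (σ k) ^ 2)
    (hPL : ∀ k, 2 * l * (Φ k - fstar) ≤
      T k + μ * L ^ 2 * ((n : ℝ) + 3) ^ ((3 : ℝ) / 2) * d + 2 * L * d * σ k) :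
    ∀ N : ℕ,
      (1 / ((N : ℝ) + 1)) * ∑ k ∈ Finset.range (N + 1), (Φ k - fstar) ≤
        (L / l) * (Φ 0 - fstar) / ((N : ℝ) + 1)
        + μ * d * L ^ 2 * ((n : ℝ) + 3) ^ ((3 : ℝ) / 2) / (2 * l)
        + (L * d) / (l * ((N : ℝ) + 1)) * ∑ k ∈ Finset.range (N + 1), σ k
        + (1 / (l * ((N : ℝ) + 1))) * ∑ k ∈ Finset.range (N + 1), (σ k) ^ 2 := by
  intro N
  set K : ℝ := μ * L ^ 2 * ((n : ℝ) + 3) ^ ((3 : ℝ) / 2) * d with hK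
  set A := ∑ k ∈ Finset.range (N + 1), (Φ k - fstar) with hA
  set B := ∑ k ∈ Finset.range (N + 1), σ k with hB
  set C := ∑ k ∈ Finset.range (N + 1), (σ k) ^ 2 with hC
  have htel : ∑ k ∈ Finset.range (N + 1), (Φ k - Φ (k + 1)) = Φ 0 - Φ (N + 1) :=
    Finset.sum_range_sub' Φ (N + 1)
  have hsum1 : 2 * l * A ≤
      (∑ k ∈ Finset.range (N + 1), T k) + ((N : ℝ) + 1) * K + 2 * L * d * B := by
    have := Finset.sum_le_sum (fun k _ => hPL k) (s := Finset.range (N + 1))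
    simp only [Finset.sum_add_distrib, Finset.sum_const, Finset.card_range,
      nsmul_eq_mul, ← Finset.mul_sum] at this
    push_cast at this ⊢
    linarith
  have hsum2 : (∑ k ∈ Finset.range (N + 1), T k) ≤ 2 * L * (Φ 0 - Φ (N + 1)) + 2 * C := by
    have := Finset.sum_le_sum (fun k _ => hrec k) (s := Finset.range (N + 1))
    simp only [Finset.sum_add_distrib, ← Finset.mul_sum] at this
    rw [htel] at this
    linarith
  have hmain : 2 * l * A ≤ 2 * L * (Φ 0 - fstar) + ((N : ℝ) + 1) * K + 2 * L * d * B + 2 * C := by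
    have h1 := hΦ (N + 1)
    nlinarith [hsum1, hsum2]
  have hN : (0 : ℝ) < (N : ℝ) + 1 := by positivity
  have hKeq : μ * d * L ^ 2 * ((n : ℝ) + 3) ^ ((3 : ℝ) / 2) = K := by ring
  rw [hKeq]
  have h2 : 1 / ((N : ℝ) + 1) * A ≤
      (2 * L * (Φ 0 - fstar) + ((N : ℝ) + 1) * K + 2 * L * d * B + 2 * C) /
        (2 * l * ((N : ℝ) + 1)) := by
    rw [le_div_iff₀ (by positivity)]
    have hmul : 1 / ((N : ℝ) + 1) * A * (2 * l * ((N : ℝ) + 1)) = 2 * l * A := by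
      field_simp
    linarith [hmain, hmul.le, hmul.ge]
  refine h2.trans (le_of_eq ?_)
  field_simp
end
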